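/- Let α, β ∈ V be linearly independent vectors with ⟨α,α⟩ < 0 and ⟨β,β⟩ < 0. Then the equation ⟨tβ − α, tβ − α⟩ = 0 has no real solution t if and only if there exists δ ∈ V with ⟨δ,δ⟩ > 0, ⟨δ,L⟩ > 0, ⟨δ,α⟩ = 0 and ⟨δ,β⟩ = 0. -/
import Mathlib


open scoped BigOperators

/-- The Minkowski intersection form of signature (1,r) on `ℝ^{r+1}`:
`⟨u,v⟩ = u₀v₀ − u₁v₁ − ⋯ − u_r v_r`. -/
noncomputable def mform (r : ℕ) (u v : Fin (r + 1) → ℝ) : ℝ :=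
  u 0 * v 0 - ∑ i : Fin r, u i.succ * v i.succ

/-- The class `L = (1,0,…,0)` of a line. -/
def lclass (r : ℕ) : Fin (r + 1) → ℝ := fun i => if i = 0 then 1 else 0

/-- The canonical class `K = (−3,1,…,1)`. -/
def kclass (r : ℕ) : Fin (r + 1) → ℝ := fun i => if i = 0 then -3 else 1

/-- `Q = {α : ⟨α,α⟩ ≥ 0, ⟨α,L⟩ > 0}`. -/
def Qset (r : ℕ) : Set (Fin (r + 1) → ℝ) :=
  {α | 0 ≤ mform r α α ∧ 0 < mform r α (lclass r)}

/-- `Q̄ = {α : ⟨α,α⟩ ≥ 0, ⟨α,L⟩ ≥ 0}`. -/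
def Qbar (r : ℕ) : Set (Fin (r + 1) → ℝ) :=
  {α | 0 ≤ mform r α α ∧ 0 ≤ mform r α (lclass r)}

namespace Stmt3Aux

lemma mform_symm (r : ℕ) (u v : Fin (r + 1) → ℝ) : mform r u v = mform r v u := by
  unfold mform
  congr 1
  · ring
  · exact Finset.sum_congr rfl fun i _ => by ring

lemma mform_sub_left (r : ℕ) (u v w : Fin (r + 1) → ℝ) :
    mform r (u - v) w = mform r u w - mform r v w := by
  unfold mform
  simp only [Pi.sub_apply, sub_mul]
  rw [Finset.sum_sub_distrib]
  ring

lemma mform_smul_left (r : ℕ) (c : ℝ) (u v : Fin (r + 1) → ℝ) :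
    mform r (c • u) v = c * mform r u v := by
  unfold mform
  simp only [Pi.smul_apply, smul_eq_mul]
  rw [mul_sub, Finset.mul_sum]
  congr 1
  · ring
  · exact Finset.sum_congr rfl fun i _ => by ring

lemma mform_sub_right (r : ℕ) (u v w : Fin (r + 1) → ℝ) :
    mform r u (v - w) = mform r u v - mform r u w := by
  rw [mform_symm, mform_sub_left, mform_symm r v u, mform_symm r w u]

lemma mform_smul_right (r : ℕ) (c : ℝ) (u v : Fin (r + 1) → ℝ) :
    mform r u (c • v) = c * mform r u v := by
  rw [mform_symm, mform_smul_left, mform_symm]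

lemma mform_lclass_right (r : ℕ) (u : Fin (r + 1) → ℝ) :
    mform r u (lclass r) = u 0 := by
  unfold mform lclass
  have : ∀ i : Fin r, u i.succ * (if (i.succ : Fin (r+1)) = 0 then (1:ℝ) else 0) = 0 := by
    intro i
    rw [if_neg (Fin.succ_ne_zero i)]
    ring
  rw [Finset.sum_congr rfl fun i _ => this i]
  simp

lemma mform_lclass_left (r : ℕ) (u : Fin (r + 1) → ℝ) :
    mform r (lclass r) u = u 0 := by
  rw [mform_symm, mform_lclass_right]

lemma mform_lclass_lclass (r : ℕ) : mform r (lclass r) (lclass r) = 1 := by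
  rw [mform_lclass_left]; rfl

/-- Expansion of the quadratic in `t`. -/
lemma mform_expand (r : ℕ) (t : ℝ) (α β : Fin (r + 1) → ℝ) :
    mform r (t • β - α) (t • β - α) =
      t * t * mform r β β - 2 * t * mform r α β + mform r α α := by
  rw [mform_sub_left, mform_sub_right, mform_sub_right, mform_smul_left, mform_smul_left,
    mform_smul_right, mform_smul_right, mform_symm r β α]
  ring

/-- Key Lorentzian fact: a nonzero vector orthogonal to a timelike vector is spacelike. -/
lemma spacelike_of_orth_timelike (r : ℕ) (δ γ : Fin (r + 1) → ℝ)
    (hδ : 0 < mform r δ δ) (horth : mform r δ γ = 0) (hγ : γ ≠ 0) :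
    mform r γ γ < 0 := by
  unfold mform at *
  set Sd := ∑ i : Fin r, δ i.succ * δ i.succ with hSd
  set Sg := ∑ i : Fin r, γ i.succ * γ i.succ with hSg
  set Sdg := ∑ i : Fin r, δ i.succ * γ i.succ with hSdg
  have hcs : Sdg ^ 2 ≤ Sd * Sg := by
    have := Finset.sum_mul_sq_le_sq_mul_sq Finset.univ (fun i : Fin r => δ i.succ)
      (fun i : Fin r => γ i.succ)
    calc Sdg ^ 2 = (∑ i : Fin r, δ i.succ * γ i.succ) ^ 2 := by rw [hSdg]
      _ ≤ (∑ i : Fin r, δ i.succ ^ 2) * ∑ i : Fin r, γ i.succ ^ 2 := this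
      _ = Sd * Sg := by rw [hSd, hSg]; congr 1 <;> exact Finset.sum_congr rfl fun i _ => (sq _)
  have hSd0 : 0 ≤ Sd := Finset.sum_nonneg fun i _ => mul_self_nonneg _
  have hSg0 : 0 ≤ Sg := Finset.sum_nonneg fun i _ => mul_self_nonneg _
  have hd0 : δ 0 ≠ 0 := by
    intro h
    rw [h] at hδ
    nlinarith
  rcases eq_or_lt_of_le hSg0 with hSgz | hSgp
  · -- all spatial components of γ vanish, hence γ = 0, contradiction
    exfalso
    apply hγ
    have hall : ∀ i : Fin r, γ i.succ = 0 := by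
      intro i
      have := Finset.sum_eq_zero_iff_of_nonneg
        (fun j (_ : j ∈ Finset.univ) => mul_self_nonneg (γ j.succ)) |>.mp hSgz.symm i
        (Finset.mem_univ i)
      exact mul_self_eq_zero.mp this
    have hSdgz : Sdg = 0 := by
      rw [hSdg]
      exact Finset.sum_eq_zero fun i _ => by rw [hall i]; ring
    have hγ0 : γ 0 = 0 := by
      rw [hSdgz] at horth
      have : δ 0 * γ 0 = 0 := by linarith
      exact (mul_eq_zero.mp this).resolve_left hd0
    funext i
    refine Fin.cases ?_ ?_ i
    · exact hγ0
    · exact hall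
  · -- Sg > 0
    have key : (δ 0 * γ 0) ^ 2 ≤ Sd * Sg := by
      have : δ 0 * γ 0 = Sdg := by linarith
      rw [this]; exact hcs
    nlinarith [sq_nonneg (γ 0), sq_nonneg (δ 0)]

end Stmt3Aux

open Stmt3Aux in
theorem stmt3 (r : ℕ) (hr : 1 ≤ r) (α β : Fin (r + 1) → ℝ)
    (hind : LinearIndependent ℝ ![α, β])
    (hαα : mform r α α < 0) (hββ : mform r β β < 0) :
    (¬ ∃ t : ℝ, mform r (t • β - α) (t • β - α) = 0) ↔
      (∃ δ : Fin (r + 1) → ℝ, 0 < mform r δ δ ∧ 0 < mform r δ (lclass r) ∧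
        mform r δ α = 0 ∧ mform r δ β = 0) := by
  set a := mform r α α with ha
  set b := mform r β β with hb
  set m := mform r α β with hm
  have hbne : b ≠ 0 := ne_of_lt hββ
  constructor
  · -- forward: no real root ⇒ construct δ
    intro hno
    -- discriminant is negative: m^2 < a*b
    have hdisc : m * m < a * b := by
      by_contra hge
      push_neg at hge
      apply hno
      set s := Real.sqrt (m * m - a * b) with hs
      have hs2 : s * s = m * m - a * b :=
        Real.mul_self_sqrt (by linarith : (0:ℝ) ≤ m * m - a * b)
      refine ⟨(m + s) / b, ?_⟩
      rw [mform_expand, ← ha, ← hb, ← hm]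
      field_simp
      ring_nf
      nlinarith [hs2]
    -- construct δ as projection of L away from span(α,β)
    set D := a * b - m * m with hD
    have hDpos : 0 < D := by rw [hD]; linarith
    set a' := mform r α (lclass r) with ha'
    set b' := mform r β (lclass r) with hb'
    set c := (a' * b - b' * m) / D with hc
    set d := (a * b' - m * a') / D with hd
    refine ⟨lclass r - c • α - d • β, ?_, ?_, ?_, ?_⟩
    · -- 0 < ⟨δ,δ⟩
      have horthα : mform r (lclass r - c • α - d • β) α = 0 := by
        rw [mform_sub_left, mform_sub_left, mform_smul_left, mform_smul_left,
          mform_lclass_left, mform_symm r β α, ← ha, ← hm]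
        have hLα : α 0 = a' := by rw [ha', mform_lclass_right]
        rw [hLα, hc, hd]
        field_simp
        ring
      have horthβ : mform r (lclass r - c • α - d • β) β = 0 := by
        rw [mform_sub_left, mform_sub_left, mform_smul_left, mform_smul_left,
          mform_lclass_left, ← hm, ← hb]
        have hLβ : β 0 = b' := by rw [hb', mform_lclass_right]
        rw [hLβ, hc, hd]
        field_simp
        ring
      have hδδ : mform r (lclass r - c • α - d • β) (lclass r - c • α - d • β)
          = 1 - c * a' - d * b' := by
        rw [mform_sub_right, mform_sub_right, mform_smul_right, mform_smul_right,
          horthα, horthβ, mform_sub_left, mform_sub_left, mform_smul_left, mform_smul_left,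
          mform_lclass_lclass, ← ha', ← hb']
        ring
      rw [hδδ]
      -- c * a' + d * b' ≤ 0
      have hw : c * a' + d * b' = (b * a' * a' - 2 * m * a' * b' + a * b' * b') / D := by
        rw [hc, hd]; field_simp; ring
      have hnum : b * a' * a' - 2 * m * a' * b' + a * b' * b' ≤ 0 := by
        nlinarith [sq_nonneg (a * b' - m * a'), sq_nonneg a']
      have : c * a' + d * b' ≤ 0 := by
        rw [hw]
        exact div_nonpos_of_nonpos_of_nonneg hnum (le_of_lt hDpos)
      linarith
    · -- 0 < ⟨δ,L⟩
      have hδL : mform r (lclass r - c • α - d • β) (lclass r)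
          = 1 - c * a' - d * b' := by
        rw [mform_sub_left, mform_sub_left, mform_smul_left, mform_smul_left,
          mform_lclass_lclass, ← ha', ← hb']
      rw [hδL]
      have hw : c * a' + d * b' = (b * a' * a' - 2 * m * a' * b' + a * b' * b') / D := by
        rw [hc, hd]; field_simp; ring
      have hnum : b * a' * a' - 2 * m * a' * b' + a * b' * b' ≤ 0 := by
        nlinarith [sq_nonneg (a * b' - m * a'), sq_nonneg a']
      have : c * a' + d * b' ≤ 0 := by
        rw [hw]
        exact div_nonpos_of_nonpos_of_nonneg hnum (le_of_lt hDpos)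
      linarith
    · -- ⟨δ,α⟩ = 0
      rw [mform_sub_left, mform_sub_left, mform_smul_left, mform_smul_left,
        mform_lclass_left, mform_symm r β α, ← ha, ← hm]
      have hLα : α 0 = a' := by rw [ha', mform_lclass_right]
      rw [hLα, hc, hd]
      field_simp
      ring
    · -- ⟨δ,β⟩ = 0
      rw [mform_sub_left, mform_sub_left, mform_smul_left, mform_smul_left,
        mform_lclass_left, ← hm, ← hb]
      have hLβ : β 0 = b' := by rw [hb', mform_lclass_right]
      rw [hLβ, hc, hd]
      field_simp
      ring
  · -- reverse: δ exists ⇒ no real root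
    rintro ⟨δ, hδδ, _, hδα, hδβ⟩ ⟨t, ht⟩
    have horth : mform r δ (t • β - α) = 0 := by
      rw [mform_sub_right, mform_smul_right, hδα, hδβ]
      ring
    have hne : t • β - α ≠ 0 := by
      intro h
      have h2 := (linearIndependent_fin2.mp hind).2 t
      apply h2
      have : (![α, β] : Fin 2 → (Fin (r+1) → ℝ)) 0 = α := rfl
      have h1 : (![α, β] : Fin 2 → (Fin (r+1) → ℝ)) 1 = β := rfl
      rw [this, h1]
      exact sub_eq_zero.mp h
    have := spacelike_of_orth_timelike r δ (t • β - α) hδδ horth hne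
    rw [ht] at this
    exact lt_irrefl 0 this
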